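/- Let X be a finite set of observations with |X| ≥ 3. For all x, y, z ∈ X, the band distance satisfies the triangle inequality: D_{xz} ≤ D_{xy} + D_{yz}. -/

import Mathlib

open Finset
open scoped Classical

/-- The set of times at which observation `x` lies within the band determined by the
unordered pair `s` of observations: times `t` with `b_ℓ(t) ≤ x t ≤ b_u(t)`. -/
noncomputable def timesInS {T : Type*} [Fintype T] (s : Sym2 (T → ℝ)) (x : T → ℝ) : Finset T :=
  Finset.univ.filter (fun t =>
    Sym2.lift ⟨fun v w => min (v t) (w t), fun v w => min_comm (v t) (w t)⟩ s ≤ x t ∧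
    x t ≤ Sym2.lift ⟨fun v w => max (v t) (w t), fun v w => max_comm (v t) (w t)⟩ s)

/-- The set of bands of a dataset `X`: one band for each unordered pair of distinct
observations in `X`. -/
noncomputable def bands {T : Type*} [Fintype T] (X : Finset (T → ℝ)) : Finset (Sym2 (T → ℝ)) :=
  X.sym2.filter (fun s => ¬ s.IsDiag)

/-- Bandwise (Jaccard) similarity of `x` and `y` with respect to the band `s`. -/
noncomputable def bandSimS {T : Type*} [Fintype T] (s : Sym2 (T → ℝ)) (x y : T → ℝ) : ℝ :=
  if timesInS s x ∪ timesInS s y = ∅ then 1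
  else ((timesInS s x ∩ timesInS s y).card : ℝ) / ((timesInS s x ∪ timesInS s y).card : ℝ)

/-- Bandwise (Jaccard) distance of `x` and `y` with respect to the band `s`. -/
noncomputable def bandDistS {T : Type*} [Fintype T] (s : Sym2 (T → ℝ)) (x y : T → ℝ) : ℝ :=
  1 - bandSimS s x y

/-- `B_{xy}`: the set of bands of `X` containing `x` or `y` at some time. -/
noncomputable def Bxy {T : Type*} [Fintype T] (X : Finset (T → ℝ)) (x y : T → ℝ) :
    Finset (Sym2 (T → ℝ)) :=
  (bands X).filter (fun s => timesInS s x ∪ timesInS s y ≠ ∅)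

/-- The band distance `D_{xy}`: the average bandwise distance over all bands in `B_{xy}`. -/
noncomputable def bandD {T : Type*} [Fintype T] (X : Finset (T → ℝ)) (x y : T → ℝ) : ℝ :=
  (1 / ((Bxy X x y).card : ℝ)) * ∑ s ∈ Bxy X x y, bandDistS s x y

section Aux

open scoped symmDiff

/-- Purely arithmetic form of the averaged triangle inequality. -/
lemma num_ineq (a b c k p q u : ℝ) (ha : 0 ≤ a) (hb : 0 ≤ b) (hc : 0 ≤ c) (hk : 0 ≤ k)
    (hp : 0 ≤ p) (hq : 0 ≤ q) (hu : 0 ≤ u) (hpk : p ≤ k) (hqk : q ≤ k) (huk : u ≤ k)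
    (hpq : u ≤ p + q) :
    (u + a + c) / (k + a + c) ≤ (p + a + b) / (k + a + b) + (q + b + c) / (k + b + c) := by
  by_cases hkac : k + a + c = 0
  · have h1 : u + a + c = 0 := by nlinarith
    rw [h1, zero_div]
    positivity
  have h0 : 0 < k + a + c := lt_of_le_of_ne (by linarith) (Ne.symm hkac)
  by_cases hkab : k + a + b = 0
  · have hk0 : k = 0 := by linarith
    have ha0 : a = 0 := by linarith
    have hb0 : b = 0 := by linarith
    have hp0 : p = 0 := by linarith
    have hq0 : q = 0 := by linarith
    have hu0 : u = 0 := by linarith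
    have hc0 : 0 < c := by linarith
    subst hk0 ha0 hb0 hp0 hq0 hu0
    simp only [add_zero, zero_add, zero_div]
    rw [div_self (ne_of_gt hc0)]
  have h1 : 0 < k + a + b := lt_of_le_of_ne (by linarith) (Ne.symm hkab)
  by_cases hkbc : k + b + c = 0
  · have hk0 : k = 0 := by linarith
    have hb0 : b = 0 := by linarith
    have hc0 : c = 0 := by linarith
    have hp0 : p = 0 := by linarith
    have hq0 : q = 0 := by linarith
    have hu0 : u = 0 := by linarith
    have ha0 : 0 < a := by linarith
    subst hk0 hb0 hc0 hp0 hq0 hu0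
    simp only [add_zero, zero_add, zero_div]
    rw [div_self (ne_of_gt ha0)]
  have h2 : 0 < k + b + c := lt_of_le_of_ne (by linarith) (Ne.symm hkbc)
  rcases eq_or_lt_of_le hk with hk0 | hkpos
  · have hp0 : p = 0 := by linarith
    have hq0 : q = 0 := by linarith
    have hu0 : u = 0 := by linarith
    subst hp0 hq0 hu0
    rw [← hk0] at h0 h1 h2 ⊢
    simp only [zero_add]
    rw [div_self (ne_of_gt (by linarith : (0:ℝ) < a + c)),
        div_self (ne_of_gt (by linarith : (0:ℝ) < a + b)),
        div_self (ne_of_gt (by linarith : (0:ℝ) < b + c))]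
    norm_num
  obtain ⟨u1, u2, huu, hu10, hu1p, hu20, hu2q⟩ :
      ∃ u1 u2, u = u1 + u2 ∧ 0 ≤ u1 ∧ u1 ≤ p ∧ 0 ≤ u2 ∧ u2 ≤ q := by
    rcases le_total u p with h | h
    · exact ⟨u, 0, by ring, hu, h, le_refl 0, hq⟩
    · exact ⟨p, u - p, by ring, hp, le_refl p, by linarith, by linarith⟩
  have hka : 0 < k + a := by linarith
  have hkc : 0 < k + c := by linarith
  have step1 : (u + a + c) / (k + a + c) ≤ (u1 + a) / (k + a) + (u2 + c) / (k + c) := by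
    have e : (u + a + c) / (k + a + c) = (u1 + a) / (k + a + c) + (u2 + c) / (k + a + c) := by
      rw [← add_div]; ring_nf; rw [huu]; ring_nf
    rw [e]
    have g1 : (u1 + a) / (k + a + c) ≤ (u1 + a) / (k + a) :=
      div_le_div_of_nonneg_left (by linarith) hka (by linarith)
    have g2 : (u2 + c) / (k + a + c) ≤ (u2 + c) / (k + c) :=
      div_le_div_of_nonneg_left (by linarith) hkc (by linarith)
    linarith
  have step2 : (u1 + a) / (k + a) ≤ (p + a + b) / (k + a + b) := by
    rw [div_le_div_iff₀ hka h1]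
    nlinarith [mul_nonneg hb (sub_nonneg.2 hpk)]
  have step3 : (u2 + c) / (k + c) ≤ (q + b + c) / (k + b + c) := by
    rw [div_le_div_iff₀ hkc h2]
    nlinarith [mul_nonneg hb (sub_nonneg.2 hqk)]
  linarith

lemma jd_eq {α : Type*} [DecidableEq α] (A B : Finset α) (h : A ∪ B ≠ ∅) :
    1 - ((A ∩ B).card : ℝ) / ((A ∪ B).card : ℝ) = ((A ∆ B).card : ℝ) / ((A ∪ B).card : ℝ) := by
  have hsub : A ∩ B ⊆ A ∪ B := (inter_subset_left).trans subset_union_left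
  have hd : A ∆ B = (A ∪ B) \ (A ∩ B) := symmDiff_eq_sup_sdiff_inf A B
  have hcard : (A ∆ B).card = (A ∪ B).card - (A ∩ B).card := by
    rw [hd, card_sdiff_of_subset hsub]
  have hpos : (0:ℝ) < ((A ∪ B).card : ℝ) := by
    have := Finset.card_pos.2 (nonempty_iff_ne_empty.2 h)
    exact_mod_cast this
  have hle : (A ∩ B).card ≤ (A ∪ B).card := card_le_card hsub
  rw [hcard]
  push_cast [hle]
  field_simp

/-- The Jaccard distance on finite sets satisfies the triangle inequality. -/
lemma jac_tri {α : Type*} [DecidableEq α] (A B C : Finset α) :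
    (if A ∪ C = ∅ then (0:ℝ) else 1 - ((A ∩ C).card : ℝ) / ((A ∪ C).card : ℝ)) ≤
    (if A ∪ B = ∅ then (0:ℝ) else 1 - ((A ∩ B).card : ℝ) / ((A ∪ B).card : ℝ)) +
    (if B ∪ C = ∅ then (0:ℝ) else 1 - ((B ∩ C).card : ℝ) / ((B ∪ C).card : ℝ)) := by
  have nonneg : ∀ (P Q : Finset α),
      0 ≤ (if P ∪ Q = ∅ then (0:ℝ) else 1 - ((P ∩ Q).card : ℝ) / ((P ∪ Q).card : ℝ)) := by
    intro P Q
    split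
    · exact le_rfl
    · have h1 : ((P ∩ Q).card : ℝ) ≤ ((P ∪ Q).card : ℝ) := by
        exact_mod_cast card_le_card ((inter_subset_left).trans subset_union_left)
      have h2 : (0:ℝ) ≤ ((P ∪ Q).card : ℝ) := by positivity
      have := div_le_one_of_le₀ h1 h2
      linarith
  by_cases hAC : A ∪ C = ∅
  · rw [if_pos hAC]
    exact add_nonneg (nonneg A B) (nonneg B C)
  by_cases hAB : A ∪ B = ∅
  · obtain ⟨hA, hB⟩ := union_eq_empty.1 hAB
    subst hA hB
    simp
  by_cases hBC : B ∪ C = ∅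
  · obtain ⟨hB, hC⟩ := union_eq_empty.1 hBC
    subst hB hC
    simp
  rw [if_neg hAC, if_neg hAB, if_neg hBC, jd_eq A C hAC, jd_eq A B hAB, jd_eq B C hBC]
  set N : ℝ := ((A ∆ C).card : ℝ) with hN
  set D : ℝ := ((A ∪ C).card : ℝ) with hD
  set m : ℝ := ((B \ (A ∪ C)).card : ℝ) with hm
  have hNnn : 0 ≤ N := by positivity
  have hmnn : 0 ≤ m := by positivity
  have hDpos : 0 < D := by
    rw [hD]
    have := Finset.card_pos.2 (nonempty_iff_ne_empty.2 hAC)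
    exact_mod_cast this
  have hND : N ≤ D := by
    have : A ∆ C ⊆ A ∪ C := by
      rw [symmDiff_eq_sup_sdiff_inf]; exact sdiff_subset
    rw [hN, hD]
    exact_mod_cast card_le_card this
  have step1 : N / D ≤ (N + m) / (D + m) := by
    rw [div_le_div_iff₀ hDpos (by linarith)]
    nlinarith
  have hdisj : Disjoint (A ∪ C) (B \ (A ∪ C)) := disjoint_sdiff
  have huni : (A ∪ C) ∪ (B \ (A ∪ C)) = A ∪ B ∪ C := by
    rw [union_sdiff_self_eq_union]
    ext t; simp [mem_union]; tauto
  have hu : D + m = ((A ∪ B ∪ C).card : ℝ) := by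
    rw [hD, hm, ← huni]
    exact_mod_cast (card_union_of_disjoint hdisj).symm
  have hsub1 : A ∆ C ⊆ (A ∆ B) ∪ (B ∆ C) := symmDiff_triangle A B C
  have hsub2 : B \ (A ∪ C) ⊆ (A ∆ B) ∪ (B ∆ C) := by
    intro t ht
    simp only [mem_sdiff, mem_union] at ht
    simp only [mem_union, Finset.mem_symmDiff]
    tauto
  have hdisj2 : Disjoint (A ∆ C) (B \ (A ∪ C)) := by
    have : A ∆ C ⊆ A ∪ C := by
      rw [symmDiff_eq_sup_sdiff_inf]; exact sdiff_subset
    exact Disjoint.mono_left this disjoint_sdiff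
  have step2 : N + m ≤ ((A ∆ B).card : ℝ) + ((B ∆ C).card : ℝ) := by
    have e1 : (A ∆ C).card + (B \ (A ∪ C)).card = ((A ∆ C) ∪ (B \ (A ∪ C))).card :=
      (card_union_of_disjoint hdisj2).symm
    have e2 : ((A ∆ C) ∪ (B \ (A ∪ C))).card ≤ ((A ∆ B) ∪ (B ∆ C)).card :=
      card_le_card (union_subset hsub1 hsub2)
    have e3 : ((A ∆ B) ∪ (B ∆ C)).card ≤ (A ∆ B).card + (B ∆ C).card := card_union_le _ _
    rw [hN, hm]
    exact_mod_cast e1 ▸ le_trans e2 e3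
  have hABpos : (0:ℝ) < ((A ∪ B).card : ℝ) := by
    have := Finset.card_pos.2 (nonempty_iff_ne_empty.2 hAB)
    exact_mod_cast this
  have hBCpos : (0:ℝ) < ((B ∪ C).card : ℝ) := by
    have := Finset.card_pos.2 (nonempty_iff_ne_empty.2 hBC)
    exact_mod_cast this
  have hABle : ((A ∪ B).card : ℝ) ≤ D + m := by
    rw [hu]
    exact_mod_cast card_le_card (union_subset (subset_union_left.trans subset_union_left)
      (subset_union_right.trans subset_union_left))
  have hBCle : ((B ∪ C).card : ℝ) ≤ D + m := by
    rw [hu]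
    exact_mod_cast card_le_card (union_subset (subset_union_right.trans subset_union_left)
      subset_union_right)
  have hDm : 0 < D + m := by linarith
  have step3 : (N + m) / (D + m) ≤ ((A ∆ B).card : ℝ) / ((A ∪ B).card : ℝ) +
      ((B ∆ C).card : ℝ) / ((B ∪ C).card : ℝ) := by
    calc (N + m) / (D + m) ≤ (((A ∆ B).card : ℝ) + ((B ∆ C).card : ℝ)) / (D + m) := by
          gcongr
      _ = ((A ∆ B).card : ℝ) / (D + m) + ((B ∆ C).card : ℝ) / (D + m) := add_div _ _ _
      _ ≤ ((A ∆ B).card : ℝ) / ((A ∪ B).card : ℝ) + ((B ∆ C).card : ℝ) / ((B ∪ C).card : ℝ) := by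
          have g1 := div_le_div_of_nonneg_left
            (by positivity : (0:ℝ) ≤ ((A ∆ B).card : ℝ)) hABpos hABle
          have g2 := div_le_div_of_nonneg_left
            (by positivity : (0:ℝ) ≤ ((B ∆ C).card : ℝ)) hBCpos hBCle
          linarith
  linarith

variable {T : Type*} [Fintype T]

lemma bandDistS_eq (s : Sym2 (T → ℝ)) (x y : T → ℝ) :
    bandDistS s x y = if timesInS s x ∪ timesInS s y = ∅ then (0:ℝ)
      else 1 - ((timesInS s x ∩ timesInS s y).card : ℝ) /
        ((timesInS s x ∪ timesInS s y).card : ℝ) := by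
  unfold bandDistS bandSimS
  split <;> ring

lemma bandDistS_nonneg (s : Sym2 (T → ℝ)) (x y : T → ℝ) : 0 ≤ bandDistS s x y := by
  rw [bandDistS_eq]
  split
  · exact le_rfl
  · have h1 : ((timesInS s x ∩ timesInS s y).card : ℝ)
        ≤ ((timesInS s x ∪ timesInS s y).card : ℝ) := by
      exact_mod_cast card_le_card ((inter_subset_left).trans subset_union_left)
    have h2 : (0:ℝ) ≤ ((timesInS s x ∪ timesInS s y).card : ℝ) := by positivity
    have := div_le_one_of_le₀ h1 h2
    linarith

lemma bandDistS_le_one (s : Sym2 (T → ℝ)) (x y : T → ℝ) : bandDistS s x y ≤ 1 := by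
  rw [bandDistS_eq]
  split
  · norm_num
  · have : (0:ℝ) ≤ ((timesInS s x ∩ timesInS s y).card : ℝ) /
        ((timesInS s x ∪ timesInS s y).card : ℝ) := by positivity
    linarith

lemma bandDistS_tri (s : Sym2 (T → ℝ)) (x y z : T → ℝ) :
    bandDistS s x z ≤ bandDistS s x y + bandDistS s y z := by
  rw [bandDistS_eq, bandDistS_eq, bandDistS_eq]
  exact jac_tri (timesInS s x) (timesInS s y) (timesInS s z)

lemma bandDistS_one_left (s : Sym2 (T → ℝ)) (x y : T → ℝ)
    (hx : timesInS s x ≠ ∅) (hy : timesInS s y = ∅) : bandDistS s x y = 1 := by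
  have hne : timesInS s x ∪ timesInS s y ≠ ∅ := fun h => hx (union_eq_empty.1 h).1
  rw [bandDistS_eq, if_neg hne, hy, inter_empty]
  simp

lemma bandDistS_one_right (s : Sym2 (T → ℝ)) (x y : T → ℝ)
    (hx : timesInS s x = ∅) (hy : timesInS s y ≠ ∅) : bandDistS s x y = 1 := by
  have hne : timesInS s x ∪ timesInS s y ≠ ∅ := fun h => hy (union_eq_empty.1 h).2
  rw [bandDistS_eq, if_neg hne, hx, empty_inter]
  simp

end Aux

/-- For a dataset `X` with at least three observations, the band distance satisfies the
triangle inequality. -/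
theorem bandD_triangle {T : Type*} [Fintype T] [Nonempty T]
    (X : Finset (T → ℝ)) (hX : 3 ≤ X.card)
    (x y z : T → ℝ) (hx : x ∈ X) (hy : y ∈ X) (hz : z ∈ X) :
    bandD X x z ≤ bandD X x y + bandD X y z := by
  classical
  unfold bandD
  set A := Bxy X x y with hA
  set C := Bxy X y z with hC
  set E := Bxy X x z with hE
  have memA : ∀ s, s ∈ A ↔ s ∈ bands X ∧ ¬(timesInS s x = ∅ ∧ timesInS s y = ∅) := by
    intro s; simp only [hA, Bxy, mem_filter, Ne, union_eq_empty]
  have memC : ∀ s, s ∈ C ↔ s ∈ bands X ∧ ¬(timesInS s y = ∅ ∧ timesInS s z = ∅) := by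
    intro s; simp only [hC, Bxy, mem_filter, Ne, union_eq_empty]
  have memE : ∀ s, s ∈ E ↔ s ∈ bands X ∧ ¬(timesInS s x = ∅ ∧ timesInS s z = ∅) := by
    intro s; simp only [hE, Bxy, mem_filter, Ne, union_eq_empty]
  set K := (A ∩ C) ∩ E with hK
  -- generic split
  have splitgen : ∀ (S U V : Finset (Sym2 (T → ℝ))) (f : Sym2 (T → ℝ) → ℝ),
      ∑ s ∈ S, f s = ∑ s ∈ (S ∩ U) ∩ V, f s + ∑ s ∈ (S ∩ U) \ V, f s + ∑ s ∈ S \ U, f s := by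
    intro S U V f
    rw [← Finset.sum_inter_add_sum_sdiff S U f, ← Finset.sum_inter_add_sum_sdiff (S ∩ U) V f]
  -- set identities
  have idA1 : (A ∩ C) ∩ E = K := rfl
  have idA2 : (A ∩ C) \ E = A \ E := by
    ext s
    simp only [mem_sdiff, mem_inter, memA s, memC s, memE s]
    tauto
  have idC1 : (C ∩ A) ∩ E = K := by
    ext s; simp only [hK, mem_inter]; tauto
  have idC2 : (C ∩ A) \ E = A \ E := by
    ext s
    simp only [mem_sdiff, mem_inter, memA s, memC s, memE s]
    tauto
  have idE1 : (E ∩ A) ∩ C = K := by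
    ext s; simp only [hK, mem_inter]; tauto
  have idE2 : (E ∩ A) \ C = A \ C := by
    ext s
    simp only [mem_sdiff, mem_inter, memA s, memC s, memE s]
    tauto
  have idE3 : E \ A = C \ A := by
    ext s
    simp only [mem_sdiff, memA s, memC s, memE s]
    tauto
  have eqA : ∀ f : Sym2 (T → ℝ) → ℝ,
      ∑ s ∈ A, f s = ∑ s ∈ K, f s + ∑ s ∈ A \ E, f s + ∑ s ∈ A \ C, f s := by
    intro f; rw [splitgen A C E f, idA1, idA2]
  have eqC : ∀ f : Sym2 (T → ℝ) → ℝ,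
      ∑ s ∈ C, f s = ∑ s ∈ K, f s + ∑ s ∈ A \ E, f s + ∑ s ∈ C \ A, f s := by
    intro f; rw [splitgen C A E f, idC1, idC2]
  have eqE : ∀ f : Sym2 (T → ℝ) → ℝ,
      ∑ s ∈ E, f s = ∑ s ∈ K, f s + ∑ s ∈ A \ C, f s + ∑ s ∈ C \ A, f s := by
    intro f; rw [splitgen E A C f, idE1, idE2, idE3]
  -- emptiness patterns on the three side pieces
  have factPx : ∀ s ∈ A \ C,
      timesInS s x ≠ ∅ ∧ timesInS s y = ∅ ∧ timesInS s z = ∅ := by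
    intro s hs
    rw [mem_sdiff, memA s, memC s] at hs
    tauto
  have factPy : ∀ s ∈ A \ E,
      timesInS s x = ∅ ∧ timesInS s y ≠ ∅ ∧ timesInS s z = ∅ := by
    intro s hs
    rw [mem_sdiff, memA s, memE s] at hs
    tauto
  have factPz : ∀ s ∈ C \ A,
      timesInS s x = ∅ ∧ timesInS s y = ∅ ∧ timesInS s z ≠ ∅ := by
    intro s hs
    rw [mem_sdiff, memA s, memC s] at hs
    tauto
  -- values on the side pieces
  have constsum : ∀ (S : Finset (Sym2 (T → ℝ))) (f : Sym2 (T → ℝ) → ℝ),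
      (∀ s ∈ S, f s = 1) → ∑ s ∈ S, f s = (S.card : ℝ) := by
    intro S f h
    rw [Finset.sum_congr rfl h, Finset.sum_const, nsmul_eq_mul, mul_one]
  have vPx_xy : ∑ s ∈ A \ C, bandDistS s x y = (((A \ C).card : ℝ)) :=
    constsum _ _ (fun s hs => bandDistS_one_left s x y (factPx s hs).1 (factPx s hs).2.1)
  have vPx_xz : ∑ s ∈ A \ C, bandDistS s x z = (((A \ C).card : ℝ)) :=
    constsum _ _ (fun s hs => bandDistS_one_left s x z (factPx s hs).1 (factPx s hs).2.2)
  have vPy_xy : ∑ s ∈ A \ E, bandDistS s x y = (((A \ E).card : ℝ)) :=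
    constsum _ _ (fun s hs => bandDistS_one_right s x y (factPy s hs).1 (factPy s hs).2.1)
  have vPy_yz : ∑ s ∈ A \ E, bandDistS s y z = (((A \ E).card : ℝ)) :=
    constsum _ _ (fun s hs => bandDistS_one_left s y z (factPy s hs).2.1 (factPy s hs).2.2)
  have vPz_yz : ∑ s ∈ C \ A, bandDistS s y z = (((C \ A).card : ℝ)) :=
    constsum _ _ (fun s hs => bandDistS_one_right s y z (factPz s hs).2.1 (factPz s hs).2.2)
  have vPz_xz : ∑ s ∈ C \ A, bandDistS s x z = (((C \ A).card : ℝ)) :=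
    constsum _ _ (fun s hs => bandDistS_one_right s x z (factPz s hs).1 (factPz s hs).2.2)
  -- names
  set k : ℝ := (K.card : ℝ) with hk
  set a : ℝ := ((A \ C).card : ℝ) with ha
  set b : ℝ := ((A \ E).card : ℝ) with hb
  set c : ℝ := ((C \ A).card : ℝ) with hc
  set p : ℝ := ∑ s ∈ K, bandDistS s x y with hp
  set q : ℝ := ∑ s ∈ K, bandDistS s y z with hq
  set u : ℝ := ∑ s ∈ K, bandDistS s x z with hu
  have cardA : (A.card : ℝ) = k + b + a := by
    have := eqA (fun _ => (1:ℝ))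
    simpa [Finset.sum_const, nsmul_eq_mul, mul_one, hk, ha, hb] using this
  have cardC : (C.card : ℝ) = k + b + c := by
    have := eqC (fun _ => (1:ℝ))
    simpa [Finset.sum_const, nsmul_eq_mul, mul_one, hk, hb, hc] using this
  have cardE : (E.card : ℝ) = k + a + c := by
    have := eqE (fun _ => (1:ℝ))
    simpa [Finset.sum_const, nsmul_eq_mul, mul_one, hk, ha, hc] using this
  have sumA : ∑ s ∈ A, bandDistS s x y = p + b + a := by
    rw [eqA (fun s => bandDistS s x y), vPy_xy, vPx_xy]
  have sumC : ∑ s ∈ C, bandDistS s y z = q + b + c := by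
    rw [eqC (fun s => bandDistS s y z), vPy_yz, vPz_yz]
  have sumE : ∑ s ∈ E, bandDistS s x z = u + a + c := by
    rw [eqE (fun s => bandDistS s x z), vPx_xz, vPz_xz]
  have hpnn : 0 ≤ p := Finset.sum_nonneg (fun s _ => bandDistS_nonneg s x y)
  have hqnn : 0 ≤ q := Finset.sum_nonneg (fun s _ => bandDistS_nonneg s y z)
  have hunn : 0 ≤ u := Finset.sum_nonneg (fun s _ => bandDistS_nonneg s x z)
  have hkbound : ∀ (v w : T → ℝ), ∑ s ∈ K, bandDistS s v w ≤ k := by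
    intro v w
    calc ∑ s ∈ K, bandDistS s v w ≤ ∑ s ∈ K, (1:ℝ) :=
          Finset.sum_le_sum (fun s _ => bandDistS_le_one s v w)
      _ = k := by rw [Finset.sum_const, nsmul_eq_mul, mul_one]
  have hpk : p ≤ k := hkbound x y
  have hqk : q ≤ k := hkbound y z
  have huk : u ≤ k := hkbound x z
  have hupq : u ≤ p + q := by
    calc u ≤ ∑ s ∈ K, (bandDistS s x y + bandDistS s y z) :=
          Finset.sum_le_sum (fun s _ => bandDistS_tri s x y z)
      _ = p + q := Finset.sum_add_distrib
  have main := num_ineq a b c k p q u (by rw [ha]; exact Nat.cast_nonneg _)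
    (by rw [hb]; exact Nat.cast_nonneg _) (by rw [hc]; exact Nat.cast_nonneg _)
    (by rw [hk]; exact Nat.cast_nonneg _) hpnn hqnn hunn hpk hqk huk hupq
  rw [sumA, sumC, sumE, cardA, cardC, cardE]
  rw [one_div_mul_eq_div, one_div_mul_eq_div, one_div_mul_eq_div]
  calc (u + a + c) / (k + a + c)
      ≤ (p + a + b) / (k + a + b) + (q + b + c) / (k + b + c) := main
    _ = (p + b + a) / (k + b + a) + (q + b + c) / (k + b + c) := by ring_nf
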